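/- Let g ≥ 2 and let B₁, …, B_{2g} ∈ SO(5) be matrices each of the form [[a, b, c, d, 0], [−b, a, d, −c, 0], [e, f, g', h, 0], [f, −e, −h, g', 0], [0, 0, 0, 0, 1]] for some real numbers a, b, c, d, e, f, g', h (depending on the matrix). Then for every generic t ∈ T (i.e., t = (θ₁, θ₂) with θ₁ + θ₂ ∉ 2πℤ and θ₁ − θ₂ ∉ 2πℤ), the product of commutators ∏_{k=1}^{g} [B_{2k−1}, B_{2k}] ≠ t. -/

import Mathlib

open Matrix Real

/-- The maximal torus element of SO(5) with angles `θ₁, θ₂`. -/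
noncomputable def torus5 (θ₁ θ₂ : ℝ) : Matrix (Fin 5) (Fin 5) ℝ :=
  !![Real.cos θ₁, -Real.sin θ₁, 0, 0, 0;
     Real.sin θ₁,  Real.cos θ₁, 0, 0, 0;
     0, 0, Real.cos θ₂, -Real.sin θ₂, 0;
     0, 0, Real.sin θ₂,  Real.cos θ₂, 0;
     0, 0, 0, 0, 1]

/-- Membership in SO(5). -/
def SO5 (M : Matrix (Fin 5) (Fin 5) ℝ) : Prop := M * Mᵀ = 1 ∧ M.det = 1

/-- `(θ₁, θ₂)` is generic: `θ₁ + θ₂ ∉ 2πℤ` and `θ₁ - θ₂ ∉ 2πℤ`. -/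
def Generic5 (θ₁ θ₂ : ℝ) : Prop :=
  (¬ ∃ k : ℤ, θ₁ + θ₂ = 2 * Real.pi * k) ∧ (¬ ∃ k : ℤ, θ₁ - θ₂ = 2 * Real.pi * k)

/-- Commutator of matrices: `[P,Q] = P Q P⁻¹ Q⁻¹`. -/
noncomputable def commMat5 (P Q : Matrix (Fin 5) (Fin 5) ℝ) : Matrix (Fin 5) (Fin 5) ℝ :=
  P * Q * P⁻¹ * Q⁻¹

/-- Matrices commuting with the complex structure `diag(J₂, -J₂, 0)`. -/
def Form5 (M : Matrix (Fin 5) (Fin 5) ℝ) : Prop :=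
  M 1 0 = -M 0 1 ∧ M 1 1 = M 0 0 ∧ M 1 2 = M 0 3 ∧ M 1 3 = -M 0 2 ∧
  M 3 0 = M 2 1 ∧ M 3 1 = -M 2 0 ∧ M 3 2 = -M 2 3 ∧ M 3 3 = M 2 2 ∧
  M 0 4 = 0 ∧ M 1 4 = 0 ∧ M 2 4 = 0 ∧ M 3 4 = 0 ∧
  M 4 0 = 0 ∧ M 4 1 = 0 ∧ M 4 2 = 0 ∧ M 4 3 = 0 ∧ M 4 4 = 1

/-- The complexification map. -/
noncomputable def psi5 (M : Matrix (Fin 5) (Fin 5) ℝ) : Matrix (Fin 2) (Fin 2) ℂ :=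
  !![(M 0 0 : ℂ) - M 0 1 * Complex.I, (M 0 2 : ℂ) + M 0 3 * Complex.I;
     (M 2 0 : ℂ) - M 2 1 * Complex.I, (M 2 2 : ℂ) + M 2 3 * Complex.I]

lemma form5_of_explicit (a b c d e f g' h : ℝ) :
    Form5 !![ a,  b,  c,  d, 0;
             -b,  a,  d, -c, 0;
              e,  f, g',  h, 0;
              f, -e, -h, g', 0;
              0,  0,  0,  0, 1] := by
  refine ⟨?_,?_,?_,?_,?_,?_,?_,?_,?_,?_,?_,?_,?_,?_,?_,?_,?_⟩ <;> rfl

lemma form5_mul {M N : Matrix (Fin 5) (Fin 5) ℝ} (hM : Form5 M) (hN : Form5 N) :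
    Form5 (M * N) := by
  obtain ⟨m1,m2,m3,m4,m5,m6,m7,m8,m9,m10,m11,m12,m13,m14,m15,m16,m17⟩ := hM
  obtain ⟨n1,n2,n3,n4,n5,n6,n7,n8,n9,n10,n11,n12,n13,n14,n15,n16,n17⟩ := hN
  refine ⟨?_,?_,?_,?_,?_,?_,?_,?_,?_,?_,?_,?_,?_,?_,?_,?_,?_⟩ <;>
    simp only [Matrix.mul_apply, Fin.sum_univ_five, m1,m2,m3,m4,m5,m6,m7,m8,m9,m10,m11,m12,m13,m14,m15,m16,m17, n1,n2,n3,n4,n5,n6,n7,n8,n9,n10,n11,n12,n13,n14,n15,n16,n17] <;> ring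

lemma form5_transpose {M : Matrix (Fin 5) (Fin 5) ℝ} (hM : Form5 M) : Form5 Mᵀ := by
  obtain ⟨m1,m2,m3,m4,m5,m6,m7,m8,m9,m10,m11,m12,m13,m14,m15,m16,m17⟩ := hM
  refine ⟨?_,?_,?_,?_,?_,?_,?_,?_,?_,?_,?_,?_,?_,?_,?_,?_,?_⟩ <;>
    simp only [Matrix.transpose_apply, m1,m2,m3,m4,m5,m6,m7,m8,m9,m10,m11,m12,m13,m14,m15,m16,m17] <;> ring

lemma psi5_mul {M N : Matrix (Fin 5) (Fin 5) ℝ} (hM : Form5 M) (hN : Form5 N) :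
    psi5 (M * N) = psi5 M * psi5 N := by
  obtain ⟨m1,m2,m3,m4,m5,m6,m7,m8,m9,m10,m11,m12,m13,m14,m15,m16,m17⟩ := hM
  obtain ⟨n1,n2,n3,n4,n5,n6,n7,n8,n9,n10,n11,n12,n13,n14,n15,n16,n17⟩ := hN
  ext i j
  fin_cases i <;> fin_cases j <;>
    simp [psi5, Matrix.mul_apply, Fin.sum_univ_five,
      m1,m2,m3,m4,m5,m6,m7,m8,m9,m10,m11,m12,m13,m14,m15,m16,m17,
      n1,n2,n3,n4,n5,n6,n7,n8,n9,n10,n11,n12,n13,n14,n15,n16,n17]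
  all_goals (ring_nf; try simp [Complex.I_sq]; try ring)

lemma form5_one : Form5 (1 : Matrix (Fin 5) (Fin 5) ℝ) := by
  refine ⟨?_,?_,?_,?_,?_,?_,?_,?_,?_,?_,?_,?_,?_,?_,?_,?_,?_⟩ <;>
    simp [Matrix.one_apply]

lemma psi5_one : psi5 (1 : Matrix (Fin 5) (Fin 5) ℝ) = 1 := by
  ext i j
  fin_cases i <;> fin_cases j <;> simp [psi5, Matrix.one_apply]

/-- Commutators of Form5 elements of SO(5) are Form5 with psi-determinant 1. -/
lemma comm_good {P Q : Matrix (Fin 5) (Fin 5) ℝ} (hP : SO5 P) (hQ : SO5 Q)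
    (hfP : Form5 P) (hfQ : Form5 Q) :
    Form5 (commMat5 P Q) ∧ (psi5 (commMat5 P Q)).det = 1 := by
  have hPinv : P⁻¹ = Pᵀ := Matrix.inv_eq_right_inv hP.1
  have hQinv : Q⁻¹ = Qᵀ := Matrix.inv_eq_right_inv hQ.1
  have hfPt : Form5 Pᵀ := form5_transpose hfP
  have hfQt : Form5 Qᵀ := form5_transpose hfQ
  have hC : commMat5 P Q = P * Q * Pᵀ * Qᵀ := by rw [commMat5, hPinv, hQinv]
  have hform : Form5 (commMat5 P Q) := by
    rw [hC]; exact form5_mul (form5_mul (form5_mul hfP hfQ) hfPt) hfQt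
  refine ⟨hform, ?_⟩
  have hdP : (psi5 P).det * (psi5 Pᵀ).det = 1 := by
    rw [← Matrix.det_mul, ← psi5_mul hfP hfPt, hP.1, psi5_one, Matrix.det_one]
  have hdQ : (psi5 Q).det * (psi5 Qᵀ).det = 1 := by
    rw [← Matrix.det_mul, ← psi5_mul hfQ hfQt, hQ.1, psi5_one, Matrix.det_one]
  rw [hC, psi5_mul (form5_mul (form5_mul hfP hfQ) hfPt) hfQt,
    psi5_mul (form5_mul hfP hfQ) hfPt, psi5_mul hfP hfQ,
    Matrix.det_mul, Matrix.det_mul, Matrix.det_mul]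
  calc (psi5 P).det * (psi5 Q).det * (psi5 Pᵀ).det * (psi5 Qᵀ).det
      = ((psi5 P).det * (psi5 Pᵀ).det) * ((psi5 Q).det * (psi5 Qᵀ).det) := by ring
    _ = 1 := by rw [hdP, hdQ, one_mul]

lemma prod_good (L : List (Matrix (Fin 5) (Fin 5) ℝ))
    (h : ∀ x ∈ L, Form5 x ∧ (psi5 x).det = 1) :
    Form5 L.prod ∧ (psi5 L.prod).det = 1 := by
  induction L with
  | nil => simpa using ⟨form5_one, by rw [psi5_one, Matrix.det_one]⟩
  | cons a l ih =>
    have ha := h a List.mem_cons_self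
    have hl := ih (fun x hx => h x (List.mem_cons_of_mem a hx))
    rw [List.prod_cons]
    refine ⟨form5_mul ha.1 hl.1, ?_⟩
    rw [psi5_mul ha.1 hl.1, Matrix.det_mul, ha.2, hl.2, one_mul]

theorem stmt1 (g : ℕ) (hg : 2 ≤ g) (B : Fin (2*g) → Matrix (Fin 5) (Fin 5) ℝ)
    (hSO : ∀ k, SO5 (B k))
    (hform : ∀ k, ∃ a b c d e f g' h : ℝ,
      B k = !![ a,  b,  c,  d, 0;
               -b,  a,  d, -c, 0;
                e,  f, g',  h, 0;
                f, -e, -h, g', 0;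
                0,  0,  0,  0, 1])
    (θ₁ θ₂ : ℝ) (hgen : Generic5 θ₁ θ₂) :
    ((List.finRange g).map (fun k =>
        commMat5 (B ⟨2*k.val, by have := k.isLt; omega⟩)
                 (B ⟨2*k.val+1, by have := k.isLt; omega⟩))).prod
      ≠ torus5 θ₁ θ₂ := by
  intro hEq
  have hf : ∀ k, Form5 (B k) := by
    intro k
    obtain ⟨a,b,c,d,e,f,g',h,hB⟩ := hform k
    rw [hB]; exact form5_of_explicit a b c d e f g' h
  have key : ∀ x ∈ (List.finRange g).map (fun k =>
        commMat5 (B ⟨2*k.val, by have := k.isLt; omega⟩)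
                 (B ⟨2*k.val+1, by have := k.isLt; omega⟩)),
      Form5 x ∧ (psi5 x).det = 1 := by
    intro x hx
    simp only [List.mem_map] at hx
    obtain ⟨k, -, rfl⟩ := hx
    exact comm_good (hSO _) (hSO _) (hf _) (hf _)
  have hprod := (prod_good _ key).2
  rw [hEq] at hprod
  -- compute the psi determinant of the torus element
  have e1 : torus5 θ₁ θ₂ 0 0 = Real.cos θ₁ := by norm_num [torus5]
  have e2 : torus5 θ₁ θ₂ 0 1 = -Real.sin θ₁ := by norm_num [torus5]
  have e3 : torus5 θ₁ θ₂ 0 2 = 0 := by rfl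
  have e4 : torus5 θ₁ θ₂ 0 3 = 0 := by rfl
  have e5 : torus5 θ₁ θ₂ 2 0 = 0 := by rfl
  have e6 : torus5 θ₁ θ₂ 2 1 = 0 := by rfl
  have e7 : torus5 θ₁ θ₂ 2 2 = Real.cos θ₂ := by rfl
  have e8 : torus5 θ₁ θ₂ 2 3 = -Real.sin θ₂ := by rfl
  have htor : (psi5 (torus5 θ₁ θ₂)).det
      = ((Real.cos θ₁ : ℂ) + Real.sin θ₁ * Complex.I)
        * ((Real.cos θ₂ : ℂ) - Real.sin θ₂ * Complex.I) := by
    rw [psi5, Matrix.det_fin_two_of, e1, e2, e3, e4, e5, e6, e7, e8]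
    push_cast
    ring
  rw [htor] at hprod
  have h1 : ((Real.cos θ₁ : ℂ) + Real.sin θ₁ * Complex.I) = Complex.exp (θ₁ * Complex.I) := by
    rw [Complex.exp_mul_I, ← Complex.ofReal_cos, ← Complex.ofReal_sin]
  have h2 : ((Real.cos θ₂ : ℂ) - Real.sin θ₂ * Complex.I) = Complex.exp (-(θ₂ : ℂ) * Complex.I) := by
    rw [Complex.exp_mul_I, Complex.cos_neg, Complex.sin_neg, ← Complex.ofReal_cos,
      ← Complex.ofReal_sin]
    ring
  rw [h1, h2, ← Complex.exp_add] at hprod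
  have heq : (θ₁ : ℂ) * Complex.I + -(θ₂ : ℂ) * Complex.I = ((θ₁ - θ₂ : ℝ)) * Complex.I := by
    push_cast; ring
  rw [heq, Complex.exp_eq_one_iff] at hprod
  obtain ⟨n, hn⟩ := hprod
  apply hgen.2
  refine ⟨n, ?_⟩
  have him := congrArg Complex.im hn
  simp [Complex.mul_im] at him
  linarith [him]
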